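/- For operators A₀, A₁ : C^n → C^m ⊗ C^k and vectors u₀, u₁ ∈ C^n ⊗ C^n (with W = C^n an auxiliary space), one has ‖Tr_Z((A₀ ⊗ 1_W) u₀ u₁* (A₁ ⊗ 1_W)*)‖₁ = F(Ψ₀(Tr_W(u₀u₀*)), Ψ₁(Tr_W(u₁u₁*))), where Ψ₀(X) = Tr_Y(A₀XA₀*) and Ψ₁(X) = Tr_Y(A₁XA₁*). -/

import Mathlib

open Matrix Kronecker
open scoped ComplexOrder

/-- Trace norm `‖A‖₁ = Tr √(Aᴴ A)` of a complex matrix. -/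
noncomputable def traceNorm {α β : Type*} [Fintype α] [Fintype β] [DecidableEq α] [DecidableEq β]
    (A : Matrix α β ℂ) : ℝ :=
  (((Matrix.posSemidef_conjTranspose_mul_self A).1.eigenvectorUnitary.1 *
      diagonal (((↑) : ℝ → ℂ) ∘ (√·) ∘ (Matrix.posSemidef_conjTranspose_mul_self A).1.eigenvalues) *
      (star (Matrix.posSemidef_conjTranspose_mul_self A).1.eigenvectorUnitary : Matrix β β ℂ)).trace).re

/-- Spectral norm (operator norm w.r.t. Euclidean norms). -/
noncomputable def specNorm {α β : Type*} [Fintype α] [Fintype β] [DecidableEq α] [DecidableEq β]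
    (A : Matrix α β ℂ) : ℝ :=
  ‖LinearMap.toContinuousLinearMap (Matrix.toEuclideanLin A)‖

/-- Frobenius norm. -/
noncomputable def frobNorm {α β : Type*} [Fintype α] [Fintype β]
    (A : Matrix α β ℂ) : ℝ :=
  Real.sqrt ((Aᴴ * A).trace.re)

/-- Positive semidefinite square root (junk value `0` off the PSD cone). -/
noncomputable def msqrt {α : Type*} [Fintype α] [DecidableEq α]
    (P : Matrix α α ℂ) : Matrix α α ℂ :=
  open scoped Classical in
  if h : P.PosSemidef then h.1.eigenvectorUnitary.1 * diagonal (((↑) : ℝ → ℂ) ∘ (√·) ∘ h.1.eigenvalues) *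
    (star h.1.eigenvectorUnitary : Matrix α α ℂ) else 0

/-- Fidelity `F(P,Q) = ‖√P √Q‖₁`. -/
noncomputable def fid {α : Type*} [Fintype α] [DecidableEq α]
    (P Q : Matrix α α ℂ) : ℝ :=
  traceNorm (msqrt P * msqrt Q)

/-- Partial trace over the second (right) tensor factor. -/
noncomputable def ptraceRight {a b : ℕ} (M : Matrix (Fin a × Fin b) (Fin a × Fin b) ℂ) :
    Matrix (Fin a) (Fin a) ℂ :=
  Matrix.of fun i j => ∑ s : Fin b, M (i, s) (j, s)

/-- Partial trace over the first (left) tensor factor. -/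
noncomputable def ptraceLeft {a b : ℕ} (M : Matrix (Fin a × Fin b) (Fin a × Fin b) ℂ) :
    Matrix (Fin b) (Fin b) ℂ :=
  Matrix.of fun i j => ∑ s : Fin a, M (s, i) (s, j)

/-- `Φ ⊗ id` acting on `L(Cⁿ ⊗ Cᵏ)`. -/
noncomputable def tensorId {n m k : ℕ}
    (Φ : Matrix (Fin n) (Fin n) ℂ → Matrix (Fin m) (Fin m) ℂ)
    (M : Matrix (Fin n × Fin k) (Fin n × Fin k) ℂ) :
    Matrix (Fin m × Fin k) (Fin m × Fin k) ℂ :=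
  Matrix.of fun p q => Φ (Matrix.of fun a c => M (a, p.2) (c, q.2)) p.1 q.1

/-- Completely bounded trace norm `¦¦¦Φ¦¦¦₁ = ‖Φ ⊗ id_{L(Cⁿ)}‖₁`. -/
noncomputable def cbTraceNorm {n m : ℕ}
    (Φ : Matrix (Fin n) (Fin n) ℂ → Matrix (Fin m) (Fin m) ℂ) : ℝ :=
  sSup {c : ℝ | ∃ M : Matrix (Fin n × Fin n) (Fin n × Fin n) ℂ,
    traceNorm M ≤ 1 ∧ c = traceNorm (tensorId Φ M)}

/-- Completely bounded spectral norm of `Ψ : L(Cᵐ) → L(Cⁿ)`, with ancilla `Cⁿ`. -/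
noncomputable def cbSpecNorm {m n : ℕ}
    (Ψ : Matrix (Fin m) (Fin m) ℂ → Matrix (Fin n) (Fin n) ℂ) : ℝ :=
  sSup {c : ℝ | ∃ M : Matrix (Fin m × Fin n) (Fin m × Fin n) ℂ,
    specNorm M ≤ 1 ∧ c = specNorm (tensorId Ψ M)}

/-- Choi–Jamiołkowski representation `J(Φ) = ∑ᵢⱼ Φ(Eᵢⱼ) ⊗ Eᵢⱼ`. -/
noncomputable def choi {n m : ℕ}
    (Φ : Matrix (Fin n) (Fin n) ℂ → Matrix (Fin m) (Fin m) ℂ) :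
    Matrix (Fin m × Fin n) (Fin m × Fin n) ℂ :=
  ∑ i : Fin n, ∑ j : Fin n, (Φ (Matrix.single i j 1)) ⊗ₖ (Matrix.single i j 1)

/-- vec mapping. -/
def vecM {n : ℕ} (A : Matrix (Fin n) (Fin n) ℂ) : Fin n × Fin n → ℂ := fun p => A p.1 p.2

/-- Partial trace over the middle factor of `(Y ⊗ Z) ⊗ W`. -/
noncomputable def ptraceMid {a b c : ℕ}
    (M : Matrix ((Fin a × Fin b) × Fin c) ((Fin a × Fin b) × Fin c) ℂ) :
    Matrix (Fin a × Fin c) (Fin a × Fin c) ℂ :=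
  Matrix.of fun p q => ∑ s : Fin b, M ((p.1, s), p.2) ((q.1, s), q.2)


section Aux
open Polynomial

variable {ι κ : Type*} [Fintype ι] [DecidableEq ι] [Fintype κ] [DecidableEq κ]

/-- conjugation by a unitary as an AlgHom -/
noncomputable def conjAH (U : Matrix.unitaryGroup ι ℂ) : Matrix ι ι ℂ →ₐ[ℂ] Matrix ι ι ℂ where
  toFun X := (U : Matrix ι ι ℂ) * X * star (U : Matrix ι ι ℂ)
  map_one' := by show (U : Matrix ι ι ℂ) * 1 * star (U : Matrix ι ι ℂ) = 1; rw [mul_one]; exact U.2.2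
  map_mul' X Y := by
    have h : star (U : Matrix ι ι ℂ) * (U : Matrix ι ι ℂ) = 1 := U.2.1
    show _ = ((U : Matrix ι ι ℂ) * X * star (U : Matrix ι ι ℂ)) * ((U : Matrix ι ι ℂ) * Y * star (U : Matrix ι ι ℂ))
    calc (U : Matrix ι ι ℂ) * (X * Y) * star (U : Matrix ι ι ℂ)
        = (U : Matrix ι ι ℂ) * X * (star (U : Matrix ι ι ℂ) * (U : Matrix ι ι ℂ)) * (Y * star (U : Matrix ι ι ℂ)) := by
          rw [h]; noncomm_ring
      _ = _ := by noncomm_ring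
  map_zero' := by simp
  map_add' X Y := by noncomm_ring
  commutes' r := by
    simp only [Algebra.algebraMap_eq_smul_one]
    show (U : Matrix ι ι ℂ) * (r • 1) * star (U : Matrix ι ι ℂ) = r • 1
    rw [mul_smul_comm, smul_mul_assoc, mul_one, U.2.2]

theorem aeval_diagonal (d : ι → ℂ) (p : ℂ[X]) :
    aeval (diagonal d) p = diagonal (fun i => p.eval (d i)) := by
  have h1 : diagonal d = (Matrix.diagonalAlgHom ℂ : (ι → ℂ) →ₐ[ℂ] Matrix ι ι ℂ) d := rfl
  rw [h1, Polynomial.aeval_algHom_apply, diagonalAlgHom_apply]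
  suffices h : (aeval (R := ℂ) d) p = fun i => p.eval (d i) by rw [h]
  funext i
  have := Polynomial.aeval_algHom_apply (Pi.evalAlgHom ℂ (fun _ : ι => ℂ) i) d p
  simp only [Pi.evalAlgHom_apply] at this
  rw [← this, aeval_def, eval₂_eq_eval_map]
  simp [Algebra.algebraMap_self]

theorem aeval_spectral {A : Matrix ι ι ℂ} (hA : A.IsHermitian) (p : ℂ[X]) :
    aeval A p = (hA.eigenvectorUnitary : Matrix ι ι ℂ) *
      diagonal (fun i => p.eval ((hA.eigenvalues i : ℝ) : ℂ)) *
      star (hA.eigenvectorUnitary : Matrix ι ι ℂ) := by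
  have h1 : A = conjAH hA.eigenvectorUnitary (diagonal (RCLike.ofReal ∘ hA.eigenvalues)) :=
    hA.spectral_theorem
  calc aeval A p = aeval (conjAH hA.eigenvectorUnitary
        (diagonal (RCLike.ofReal ∘ hA.eigenvalues))) p := by rw [← h1]
    _ = conjAH hA.eigenvectorUnitary (aeval (diagonal (RCLike.ofReal ∘ hA.eigenvalues)) p) :=
        Polynomial.aeval_algHom_apply _ _ _
    _ = _ := by rw [aeval_diagonal]; rfl

noncomputable def psqrt {P : Matrix ι ι ℂ} (h : P.PosSemidef) : Matrix ι ι ℂ :=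
  h.1.eigenvectorUnitary.1 * diagonal (((↑) : ℝ → ℂ) ∘ (√·) ∘ h.1.eigenvalues) *
    (star h.1.eigenvectorUnitary : Matrix ι ι ℂ)

theorem traceNorm_eq {α β : Type*} [Fintype α] [Fintype β] [DecidableEq α] [DecidableEq β]
    (A : Matrix α β ℂ) :
    traceNorm A = (psqrt (Matrix.posSemidef_conjTranspose_mul_self A)).trace.re := rfl

theorem psqrt_mul_self {P : Matrix ι ι ℂ} (hP : P.PosSemidef) : psqrt hP * psqrt hP = P := by
  have hU : star (hP.1.eigenvectorUnitary : Matrix ι ι ℂ) *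
      (hP.1.eigenvectorUnitary : Matrix ι ι ℂ) = 1 := hP.1.eigenvectorUnitary.2.1
  have hX := aeval_spectral hP.1 X
  simp only [aeval_X, eval_X] at hX
  refine Eq.trans ?_ hX.symm
  unfold psqrt
  rw [show ∀ D : Matrix ι ι ℂ, (hP.1.eigenvectorUnitary : Matrix ι ι ℂ) * D *
      star (hP.1.eigenvectorUnitary : Matrix ι ι ℂ) * ((hP.1.eigenvectorUnitary : Matrix ι ι ℂ) * D *
      star (hP.1.eigenvectorUnitary : Matrix ι ι ℂ)) = (hP.1.eigenvectorUnitary : Matrix ι ι ℂ) *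
      (D * (star (hP.1.eigenvectorUnitary : Matrix ι ι ℂ) * (hP.1.eigenvectorUnitary : Matrix ι ι ℂ)) * D) *
      star (hP.1.eigenvectorUnitary : Matrix ι ι ℂ) from fun D => by simp only [Matrix.mul_assoc],
    hU, Matrix.mul_one, diagonal_mul_diagonal]
  refine congrArg (fun d => _ * diagonal d * _) (funext fun i => ?_)
  simp [← Complex.ofReal_mul, Real.mul_self_sqrt (hP.eigenvalues_nonneg i)]

theorem posSemidef_psqrt {P : Matrix ι ι ℂ} (hP : P.PosSemidef) : (psqrt hP).PosSemidef := by
  unfold psqrt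
  exact (PosSemidef.diagonal (d := ((↑) : ℝ → ℂ) ∘ (√·) ∘ hP.1.eigenvalues)
    (fun i => Complex.zero_le_real.mpr (Real.sqrt_nonneg _))).mul_mul_conjTranspose_same
    (hP.1.eigenvectorUnitary : Matrix ι ι ℂ)

section B
variable {ι κ : Type*} [Fintype ι] [DecidableEq ι] [Fintype κ] [DecidableEq κ]
theorem sqrt_eq_aeval {A : Matrix ι ι ℂ} (hA : A.PosSemidef) (p : ℂ[X])
    (h : ∀ i, p.eval ((hA.1.eigenvalues i : ℝ) : ℂ) = ((Real.sqrt (hA.1.eigenvalues i) : ℝ) : ℂ)) :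
    aeval A p = psqrt hA := by
  have hfun : (fun i => p.eval ((hA.1.eigenvalues i : ℝ) : ℂ)) =
      (((↑) : ℝ → ℂ) ∘ Real.sqrt ∘ hA.1.eigenvalues) := by
    funext i; simpa using h i
  rw [aeval_spectral hA.1 p, psqrt, hfun]

/-- intertwining lemma -/
theorem aeval_intertwine {M : Matrix ι ι ℂ} {N : Matrix κ κ ℂ} {B : Matrix κ ι ℂ}
    (h : B * M = N * B) (p : ℂ[X]) : B * aeval M p = aeval N p * B := by
  induction p using Polynomial.induction_on' with
  | add f g hf hg => rw [map_add, map_add, Matrix.mul_add, Matrix.add_mul, hf, hg]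
  | monomial n a =>
      rw [aeval_monomial, aeval_monomial]
      have key : ∀ j : ℕ, B * M ^ j = N ^ j * B := by
        intro j
        induction j with
        | zero => simp
        | succ j ih =>
            rw [pow_succ, pow_succ, ← Matrix.mul_assoc, ih, Matrix.mul_assoc, h,
              ← Matrix.mul_assoc]
      simp only [Algebra.algebraMap_eq_smul_one, Matrix.smul_mul, Matrix.mul_smul, one_mul,
        key n]

/-- Core lemma: trace of sqrt(AᴴA) equals trace of sqrt(AAᴴ). -/
theorem trace_sqrt_conjTranspose_mul_self (A : Matrix ι κ ℂ) :
    (psqrt (Matrix.posSemidef_conjTranspose_mul_self A)).trace =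
    (psqrt (Matrix.posSemidef_self_mul_conjTranspose A)).trace := by
  set hN := Matrix.posSemidef_conjTranspose_mul_self A
  set hM := Matrix.posSemidef_self_mul_conjTranspose A
  classical
  -- nodes
  set s : Finset ℝ := insert 0 ((Finset.univ.image hN.1.eigenvalues) ∪
      (Finset.univ.image hM.1.eigenvalues)) with hs
  set p₀ : ℝ[X] := Lagrange.interpolate s id Real.sqrt with hp₀
  have hinj : Set.InjOn (id : ℝ → ℝ) s := Function.injective_id.injOn
  have hev : ∀ x ∈ s, p₀.eval x = Real.sqrt x := by
    intro x hx
    have := Lagrange.eval_interpolate_at_node Real.sqrt hinj hx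
    exact this
  have h0 : p₀.eval 0 = 0 := by
    rw [hev 0 (Finset.mem_insert_self _ _)]; simp
  obtain ⟨q₀, hq₀⟩ : X ∣ p₀ := by
    rw [Polynomial.X_dvd_iff, Polynomial.coeff_zero_eq_eval_zero, h0]
  set p : ℂ[X] := p₀.map (algebraMap ℝ ℂ) with hp
  set q : ℂ[X] := q₀.map (algebraMap ℝ ℂ) with hq
  have hpq : p = X * q := by rw [hp, hq, hq₀, Polynomial.map_mul, Polynomial.map_X]
  have hevC : ∀ x ∈ s, p.eval ((x : ℝ) : ℂ) = ((Real.sqrt x : ℝ) : ℂ) := by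
    intro x hx
    have hc : ((x : ℂ)) = algebraMap ℝ ℂ x := rfl
    rw [hp, Polynomial.eval_map, ← Polynomial.aeval_def, hc, Polynomial.aeval_algebraMap_apply,
      Polynomial.coe_aeval_eq_eval, hev x hx]
    rfl
  have hNs : aeval (Aᴴ * A) p = psqrt hN := by
    apply sqrt_eq_aeval
    intro i
    exact hevC _ (Finset.mem_insert_of_mem (Finset.mem_union_left _
      (Finset.mem_image_of_mem _ (Finset.mem_univ i))))
  have hMs : aeval (A * Aᴴ) p = psqrt hM := by
    apply sqrt_eq_aeval
    intro i
    exact hevC _ (Finset.mem_insert_of_mem (Finset.mem_union_right _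
      (Finset.mem_image_of_mem _ (Finset.mem_univ i))))
  have hint : Aᴴ * (A * Aᴴ) = (Aᴴ * A) * Aᴴ := by rw [Matrix.mul_assoc]
  calc (psqrt hN).trace = (aeval (Aᴴ * A) p).trace := by rw [hNs]
    _ = (aeval (Aᴴ * A) (q * X)).trace := by rw [hpq, mul_comm X q]
    _ = ((aeval (Aᴴ * A) q) * (Aᴴ * A)).trace := by
        rw [_root_.map_mul, Polynomial.aeval_X]
    _ = (((aeval (Aᴴ * A) q) * Aᴴ) * A).trace := by rw [Matrix.mul_assoc]
    _ = ((Aᴴ * aeval (A * Aᴴ) q) * A).trace := by rw [← aeval_intertwine hint q]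
    _ = (A * (Aᴴ * aeval (A * Aᴴ) q)).trace := Matrix.trace_mul_comm _ _
    _ = ((A * Aᴴ) * aeval (A * Aᴴ) q).trace := by rw [Matrix.mul_assoc]
    _ = (aeval (A * Aᴴ) (X * q)).trace := by rw [_root_.map_mul, Polynomial.aeval_X]
    _ = (psqrt hM).trace := by rw [← hpq, hMs]

end B

section C
variable {α β γ : Type*} [Fintype α] [DecidableEq α] [Fintype β] [DecidableEq β]
  [Fintype γ] [DecidableEq γ]

theorem sqrt_congr {P Q : Matrix α α ℂ} (h : P = Q) (hP : P.PosSemidef) (hQ : Q.PosSemidef) :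
    psqrt hP = psqrt hQ := by subst h; rfl

theorem eq_psqrt_of_sq_eq {S P : Matrix α α ℂ} (hS : S.PosSemidef) (hP : P.PosSemidef)
    (h : S ^ 2 = P) : S = psqrt hP := by
  classical
  set s : Finset ℝ := (Finset.univ.image hP.1.eigenvalues) ∪
    (Finset.univ.image (fun i => hS.1.eigenvalues i ^ 2)) with hs
  set p₀ : ℝ[X] := Lagrange.interpolate s id Real.sqrt with hp₀
  have hinj : Set.InjOn (id : ℝ → ℝ) s := Function.injective_id.injOn
  have hev : ∀ x ∈ s, p₀.eval x = Real.sqrt x := fun x hx =>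
    Lagrange.eval_interpolate_at_node Real.sqrt hinj hx
  set p : ℂ[X] := p₀.map (algebraMap ℝ ℂ) with hp
  have hevC : ∀ x ∈ s, p.eval ((x : ℝ) : ℂ) = ((Real.sqrt x : ℝ) : ℂ) := by
    intro x hx
    have hc : ((x : ℂ)) = algebraMap ℝ ℂ x := rfl
    rw [hp, Polynomial.eval_map, ← Polynomial.aeval_def, hc, Polynomial.aeval_algebraMap_apply,
      Polynomial.coe_aeval_eq_eval, hev x hx]
    rfl
  have h1 : aeval P p = psqrt hP := sqrt_eq_aeval hP p (fun i => hevC _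
    (Finset.mem_union_left _ (Finset.mem_image_of_mem _ (Finset.mem_univ i))))
  have h2 : aeval P p = aeval S (p.comp (X ^ 2)) := by
    rw [Polynomial.aeval_comp, map_pow, aeval_X, h]
  have hSX := aeval_spectral hS.1 X
  simp only [aeval_X, eval_X] at hSX
  rw [← h1, h2, aeval_spectral hS.1]
  refine hSX.trans (congrArg (fun d => _ * diagonal d * _) (funext fun i => ?_))
  have hm : hS.1.eigenvalues i ^ 2 ∈ s :=
    Finset.mem_union_right _ (Finset.mem_image_of_mem _ (Finset.mem_univ i))
  symm
  rw [eval_comp, eval_pow, eval_X, ← Complex.ofReal_pow, hevC _ hm,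
    Real.sqrt_sq (hS.eigenvalues_nonneg i)]

theorem traceNorm_gram {A : Matrix α γ ℂ} {B : Matrix β γ ℂ} (h : Aᴴ * A = Bᴴ * B) :
    traceNorm A = traceNorm B := by
  simp only [traceNorm_eq]
  rw [sqrt_congr h (Matrix.posSemidef_conjTranspose_mul_self A)
    (Matrix.posSemidef_conjTranspose_mul_self B)]

theorem traceNorm_conjTranspose (A : Matrix α β ℂ) : traceNorm Aᴴ = traceNorm A := by
  simp only [traceNorm_eq]
  rw [sqrt_congr (by rw [conjTranspose_conjTranspose]) (Matrix.posSemidef_conjTranspose_mul_self Aᴴ)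
    (Matrix.posSemidef_self_mul_conjTranspose A), ← trace_sqrt_conjTranspose_mul_self A]

theorem conj_conjTranspose' (M : Matrix α β ℂ) :
    (M.map (starRingEnd ℂ))ᴴ = Mᴴ.map (starRingEnd ℂ) := by
  ext i j; simp [conjTranspose_apply]

theorem posSemidef_conj {P : Matrix α α ℂ} (hP : P.PosSemidef) :
    (P.map (starRingEnd ℂ)).PosSemidef := by
  have h : P.map (starRingEnd ℂ) = Pᵀ := by
    ext i j
    have := congrFun (congrFun hP.1 j) i
    simp only [conjTranspose_apply] at this
    simp [Matrix.map_apply, transpose_apply, ← this]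
  rw [h]; exact hP.transpose

theorem sqrt_conj {P : Matrix α α ℂ} (hP : P.PosSemidef) :
    psqrt (posSemidef_conj hP) = (psqrt hP).map (starRingEnd ℂ) := by
  refine (eq_psqrt_of_sq_eq (posSemidef_conj (posSemidef_psqrt hP)) (posSemidef_conj hP) ?_).symm
  rw [pow_two, ← Matrix.map_mul, psqrt_mul_self hP]

theorem traceNorm_conj (M : Matrix α β ℂ) : traceNorm (M.map (starRingEnd ℂ)) = traceNorm M := by
  simp only [traceNorm_eq]
  have h : (M.map (starRingEnd ℂ))ᴴ * (M.map (starRingEnd ℂ)) = (Mᴴ * M).map (starRingEnd ℂ) := by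
    rw [conj_conjTranspose', ← Matrix.map_mul]
  rw [sqrt_congr h (Matrix.posSemidef_conjTranspose_mul_self _)
    (posSemidef_conj (Matrix.posSemidef_conjTranspose_mul_self M)),
    sqrt_conj (Matrix.posSemidef_conjTranspose_mul_self M)]
  rw [Matrix.trace]
  simp [Matrix.trace, Matrix.diag, Matrix.map_apply]

theorem msqrt_of_posSemidef {P : Matrix α α ℂ} (hP : P.PosSemidef) : msqrt P = psqrt hP := by
  simp [msqrt, hP, psqrt]

theorem transpose_eq_conj {P : Matrix α α ℂ} (hP : P.IsHermitian) :
    Pᵀ = P.map (starRingEnd ℂ) := by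
  ext i j
  have := congrFun (congrFun hP j) i
  simp only [conjTranspose_apply] at this
  simp [Matrix.map_apply, transpose_apply, ← this]

/-- Lemma H -/
theorem traceNorm_mul_conjTranspose_eq_fid {ι ι₂ κ : Type*} [Fintype ι] [DecidableEq ι]
    [Fintype ι₂] [DecidableEq ι₂] [Fintype κ] [DecidableEq κ]
    (U₀ : Matrix ι κ ℂ) (U₁ : Matrix ι₂ κ ℂ) :
    traceNorm (U₀ * U₁ᴴ) = fid ((U₀ᴴ * U₀)ᵀ) ((U₁ᴴ * U₁)ᵀ) := by
  have hP : (U₀ᴴ * U₀).PosSemidef := Matrix.posSemidef_conjTranspose_mul_self U₀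
  have hQ : (U₁ᴴ * U₁).PosSemidef := Matrix.posSemidef_conjTranspose_mul_self U₁
  set S₀ := psqrt hP with hS₀
  set S₁ := psqrt hQ with hS₁
  have key : traceNorm (U₀ * U₁ᴴ) = traceNorm (S₀ * S₁) := by
    have step1 : traceNorm (U₀ * U₁ᴴ) = traceNorm (S₀ * U₁ᴴ) := by
      apply traceNorm_gram
      rw [conjTranspose_mul, conjTranspose_mul, conjTranspose_conjTranspose,
        (posSemidef_psqrt hP).1]
      calc U₁ * U₀ᴴ * (U₀ * U₁ᴴ) = U₁ * (U₀ᴴ * U₀) * U₁ᴴ := by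
            rw [Matrix.mul_assoc, Matrix.mul_assoc, Matrix.mul_assoc]
        _ = U₁ * (S₀ * S₀) * U₁ᴴ := by rw [psqrt_mul_self hP]
        _ = U₁ * S₀ * (S₀ * U₁ᴴ) := by
            rw [Matrix.mul_assoc, Matrix.mul_assoc, Matrix.mul_assoc]
    have step2 : traceNorm (S₀ * U₁ᴴ) = traceNorm (U₁ * S₀) := by
      rw [← traceNorm_conjTranspose (U₁ * S₀), conjTranspose_mul, (posSemidef_psqrt hP).1]
    have step3 : traceNorm (U₁ * S₀) = traceNorm (S₁ * S₀) := by
      apply traceNorm_gram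
      rw [conjTranspose_mul, conjTranspose_mul, (posSemidef_psqrt hP).1, (posSemidef_psqrt hQ).1]
      calc S₀ * U₁ᴴ * (U₁ * S₀) = S₀ * (U₁ᴴ * U₁) * S₀ := by
            rw [Matrix.mul_assoc, Matrix.mul_assoc, Matrix.mul_assoc]
        _ = S₀ * (S₁ * S₁) * S₀ := by rw [psqrt_mul_self hQ]
        _ = S₀ * S₁ * (S₁ * S₀) := by rw [Matrix.mul_assoc, Matrix.mul_assoc, Matrix.mul_assoc]
    have step4 : traceNorm (S₁ * S₀) = traceNorm (S₀ * S₁) := by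
      rw [← traceNorm_conjTranspose (S₀ * S₁), conjTranspose_mul, (posSemidef_psqrt hP).1,
        (posSemidef_psqrt hQ).1]
    rw [step1, step2, step3, step4]
  rw [key]
  unfold fid
  rw [transpose_eq_conj hP.1, transpose_eq_conj hQ.1,
    msqrt_of_posSemidef (posSemidef_conj hP), msqrt_of_posSemidef (posSemidef_conj hQ),
    sqrt_conj hP, sqrt_conj hQ, ← Matrix.map_mul, traceNorm_conj]

end C

noncomputable def Umat {n m k : ℕ} (A : Matrix (Fin m × Fin k) (Fin n) ℂ)
    (u : Fin n × Fin n → ℂ) : Matrix (Fin m × Fin n) (Fin k) ℂ :=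
  Matrix.of fun p z => ∑ a : Fin n, A (p.1, z) a * u (a, p.2)

theorem outer_conj {ι ι₂ κ : Type*} [Fintype ι] [Fintype ι₂] [Fintype κ]
    (M : Matrix ι κ ℂ) (N : Matrix ι₂ κ ℂ) (x y : κ → ℂ) :
    M * Matrix.vecMulVec x (star y) * Nᴴ = Matrix.vecMulVec (M *ᵥ x) (star (N *ᵥ y)) := by
  ext r c
  simp only [Matrix.mul_apply, Matrix.vecMulVec_apply, Matrix.conjTranspose_apply,
    Matrix.mulVec, dotProduct, Pi.star_apply, RCLike.star_def, map_sum, _root_.map_mul,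
    Finset.sum_mul, Finset.mul_sum]
  apply Finset.sum_congr rfl; intro a _
  apply Finset.sum_congr rfl; intro b _
  ring

theorem claim1 {n m k : ℕ} (A₀ A₁ : Matrix (Fin m × Fin k) (Fin n) ℂ)
    (u₀ u₁ : Fin n × Fin n → ℂ) :
    ptraceMid ((A₀ ⊗ₖ (1 : Matrix (Fin n) (Fin n) ℂ)) * Matrix.vecMulVec u₀ (star u₁) *
        (A₁ ⊗ₖ (1 : Matrix (Fin n) (Fin n) ℂ))ᴴ) = Umat A₀ u₀ * (Umat A₁ u₁)ᴴ := by
  rw [outer_conj]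
  have hv : ∀ (A : Matrix (Fin m × Fin k) (Fin n) ℂ) (u : Fin n × Fin n → ℂ)
      (y : Fin m) (z : Fin k) (w : Fin n),
      ((A ⊗ₖ (1 : Matrix (Fin n) (Fin n) ℂ)) *ᵥ u) ((y, z), w) =
        ∑ a : Fin n, A (y, z) a * u (a, w) := by
    intro A u y z w
    simp [Matrix.mulVec, dotProduct, Fintype.sum_prod_type, Matrix.one_apply,
      mul_ite, mul_zero, ite_mul, zero_mul, Finset.sum_ite_eq, Finset.sum_ite_eq',
      Matrix.kroneckerMap_apply]
  ext p q
  obtain ⟨y, w⟩ := p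
  obtain ⟨y', w'⟩ := q
  simp only [ptraceMid, Matrix.of_apply, Matrix.vecMulVec_apply, Matrix.mul_apply,
    Matrix.conjTranspose_apply, Umat, Pi.star_apply, RCLike.star_def]
  apply Finset.sum_congr rfl; intro z _
  rw [hv A₀ u₀ y z w, hv A₁ u₁ y' z w']

theorem claim2 {n m k : ℕ} (A : Matrix (Fin m × Fin k) (Fin n) ℂ) (u : Fin n × Fin n → ℂ) :
    ptraceLeft (A * ptraceRight (Matrix.vecMulVec u (star u)) * Aᴴ) =
      ((Umat A u)ᴴ * Umat A u)ᵀ := by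
  ext z z'
  simp only [ptraceLeft, ptraceRight, Matrix.of_apply, Matrix.transpose_apply, Matrix.mul_apply,
    Matrix.conjTranspose_apply, Umat, Matrix.vecMulVec_apply, Pi.star_apply, RCLike.star_def,
    Fintype.sum_prod_type, map_sum, _root_.map_mul, Finset.mul_sum, Finset.sum_mul]
  -- LHS: ∑ y ∑ c ∑ a A((y,z),a) * (∑ s u(a,s) conj(u(c,s))) * conj(A((y,z'),c))
  apply Finset.sum_congr rfl; intro y _
  conv_lhs => rw [Finset.sum_comm]
  conv_lhs => enter [2, a]; rw [Finset.sum_comm]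
  conv_lhs => rw [Finset.sum_comm]
  apply Finset.sum_congr rfl; intro s _
  apply Finset.sum_congr rfl; intro a _
  apply Finset.sum_congr rfl; intro c _
  ring

end Aux

/-- key identity in the proof of Theorem 3.4. -/
theorem stmt17 {n m k : ℕ} (A₀ A₁ : Matrix (Fin m × Fin k) (Fin n) ℂ)
    (u₀ u₁ : Fin n × Fin n → ℂ) :
    traceNorm (ptraceMid
        ((A₀ ⊗ₖ (1 : Matrix (Fin n) (Fin n) ℂ)) * Matrix.vecMulVec u₀ (star u₁) *
          (A₁ ⊗ₖ (1 : Matrix (Fin n) (Fin n) ℂ))ᴴ))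
      = fid (ptraceLeft (A₀ * ptraceRight (Matrix.vecMulVec u₀ (star u₀)) * A₀ᴴ))
            (ptraceLeft (A₁ * ptraceRight (Matrix.vecMulVec u₁ (star u₁)) * A₁ᴴ)) := by
  rw [claim1, claim2 A₀ u₀, claim2 A₁ u₁]
  exact traceNorm_mul_conjTranspose_eq_fid (Umat A₀ u₀) (Umat A₁ u₁)
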